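/- For every natural number n ≥ 1, the sum over integers p with p ≠ n and p ≠ -n of 1/(n²-p²)² is strictly less than 4/n². -/

import Mathlib

open Real

/-- The sum over all integers of `1/k²` (with junk value `0` at `k = 0`) is `π²/3`. -/
theorem aux_hasSum_int_sq : HasSum (fun k : ℤ => (1:ℝ) / (k:ℝ) ^ 2) (π ^ 2 / 3) := by
  have h0 : HasSum (fun n : ℕ => (1:ℝ) / (n:ℝ) ^ 2) (π ^ 2 / 6) := hasSum_zeta_two
  have h1 : HasSum (fun n : ℕ => (1:ℝ) / ((n:ℝ)+1) ^ 2) (π ^ 2 / 6) := by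
    have := (hasSum_nat_add_iff' (f := fun n : ℕ => (1:ℝ) / (n:ℝ) ^ 2) 1).2 h0
    simpa using this
  have h2 : HasSum (fun n : ℕ => (1:ℝ) / (((-(n+1) : ℤ)):ℝ) ^ 2) (π ^ 2 / 6) := by
    convert h1 using 3 with m; push_cast; ring
  have := HasSum.of_nat_of_neg_add_one (f := fun k : ℤ => (1:ℝ) / (k:ℝ) ^ 2)
    (by simpa using h0) h2
  convert this using 1; ring

/-- For `n ≥ 1`, the sum over integers `p ≠ ±n` of `1/(n²-p²)²` is strictly less than `4/n²`. -/
theorem stmt1 (n : ℕ) (hn : 1 ≤ n) :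
    ∑' p : {p : ℤ // p ≠ (n : ℤ) ∧ p ≠ -(n : ℤ)},
      (1 : ℝ) / ((n : ℝ) ^ 2 - ((p.1 : ℤ) : ℝ) ^ 2) ^ 2 < 4 / (n : ℝ) ^ 2 := by
  have hn0 : (0:ℝ) < (n:ℝ) := by exact_mod_cast hn
  set S := {p : ℤ // p ≠ (n : ℤ) ∧ p ≠ -(n : ℤ)} with hS
  set g : ℤ → ℝ := fun p =>
    1 / (2 * (n:ℝ) ^ 2) * (1 / ((n:ℝ) - p) ^ 2 + 1 / ((n:ℝ) + p) ^ 2) with hg_def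
  -- The two shifted zeta-like sums
  have hT1 : HasSum (fun p : ℤ => (1:ℝ) / ((n:ℝ) - p) ^ 2) (π ^ 2 / 3) := by
    have := ((Equiv.subLeft (n:ℤ)).hasSum_iff
      (f := fun k : ℤ => (1:ℝ) / (k:ℝ) ^ 2) (a := π ^ 2 / 3)).2 aux_hasSum_int_sq
    refine this.congr_fun fun p => ?_
    simp only [Function.comp, Equiv.subLeft_apply]
    push_cast
    ring_nf
  have hT2 : HasSum (fun p : ℤ => (1:ℝ) / ((n:ℝ) + p) ^ 2) (π ^ 2 / 3) := by
    have := ((Equiv.addLeft (n:ℤ)).hasSum_iff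
      (f := fun k : ℤ => (1:ℝ) / (k:ℝ) ^ 2) (a := π ^ 2 / 3)).2 aux_hasSum_int_sq
    refine this.congr_fun fun p => ?_
    simp only [Function.comp, Equiv.coe_addLeft]
    push_cast
    ring_nf
  have hg : HasSum g (1 / (2 * (n:ℝ) ^ 2) * (π ^ 2 / 3 + π ^ 2 / 3)) :=
    (hT1.add hT2).mul_left _
  -- pointwise bound on the subtype
  have key : ∀ p : S, (1 : ℝ) / ((n : ℝ) ^ 2 - ((p.1 : ℤ) : ℝ) ^ 2) ^ 2 ≤ g p.1 := by
    rintro ⟨p, hp1, hp2⟩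
    have ha : (n:ℝ) - p ≠ 0 := by
      intro h
      exact hp1 (by exact_mod_cast (sub_eq_zero.1 h).symm)
    have hb : (n:ℝ) + p ≠ 0 := by
      intro h
      apply hp2
      have : (p:ℝ) = -(n:ℝ) := by linarith
      exact_mod_cast this
    have hfac : (n:ℝ) ^ 2 - (p:ℝ) ^ 2 = ((n:ℝ) - p) * ((n:ℝ) + p) := by ring
    simp only [hg_def, hfac]
    have hrw : 1 / (2 * (n:ℝ) ^ 2) * (1 / ((n:ℝ) - p) ^ 2 + 1 / ((n:ℝ) + p) ^ 2)
        = (((n:ℝ) - p) ^ 2 + ((n:ℝ) + p) ^ 2)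
          / (2 * (n:ℝ) ^ 2 * (((n:ℝ) - p) ^ 2 * ((n:ℝ) + p) ^ 2)) := by
      field_simp
      ring
    rw [hrw, div_le_div_iff₀ (by positivity) (by positivity)]
    nlinarith [sq_nonneg ((p:ℝ)), sq_nonneg (((n:ℝ) - p) * ((n:ℝ) + p)),
      sq_nonneg ((p:ℝ) * (((n:ℝ) - p) * ((n:ℝ) + p)))]
  -- summability and comparison of sums
  have hgS : Summable fun p : S => g p.1 := hg.summable.subtype _
  have hf_nonneg : ∀ p : S, 0 ≤ (1 : ℝ) / ((n : ℝ) ^ 2 - ((p.1 : ℤ) : ℝ) ^ 2) ^ 2 :=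
    fun p => by positivity
  have hfS : Summable fun p : S => (1 : ℝ) / ((n : ℝ) ^ 2 - ((p.1 : ℤ) : ℝ) ^ 2) ^ 2 :=
    Summable.of_nonneg_of_le hf_nonneg key hgS
  have h1 : ∑' p : S, (1 : ℝ) / ((n : ℝ) ^ 2 - ((p.1 : ℤ) : ℝ) ^ 2) ^ 2
      ≤ ∑' p : S, g p.1 := Summable.tsum_le_tsum key hfS hgS
  have h2 : ∑' p : S, g p.1 ≤ ∑' p : ℤ, g p := by
    have := Summable.tsum_subtype_le g {p : ℤ | p ≠ (n : ℤ) ∧ p ≠ -(n : ℤ)}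
      (fun p => by positivity) hg.summable
    exact this
  have h3 : ∑' p : ℤ, g p = 1 / (2 * (n:ℝ) ^ 2) * (π ^ 2 / 3 + π ^ 2 / 3) := hg.tsum_eq
  have hpi : π ^ 2 < 12 := by nlinarith [pi_lt_d2, pi_gt_three]
  calc ∑' p : S, (1 : ℝ) / ((n : ℝ) ^ 2 - ((p.1 : ℤ) : ℝ) ^ 2) ^ 2
      ≤ 1 / (2 * (n:ℝ) ^ 2) * (π ^ 2 / 3 + π ^ 2 / 3) := by
        rw [← h3]; exact h1.trans h2
    _ = π ^ 2 / (3 * (n : ℝ) ^ 2) := by ring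
    _ < 4 / (n : ℝ) ^ 2 := by
        rw [div_lt_div_iff₀ (by positivity) (by positivity)]
        nlinarith [hpi, mul_pos hn0 hn0]
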